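/- For the level ℓ = 1 case: a partition λ of n is an Uglov (equivalently, staggered) partition for the parameter e if and only if λ is e-restricted, i.e. λ_i − λ_{i+1} < e for all i ≥ 1. -/

import Mathlib

namespace CQHA

/-- A box (node) `(r, c, l)` with component `comp`, row `row` and column `col`
(rows and columns zero-indexed). -/
structure Box (ℓ : ℕ) where
  comp : Fin ℓ
  row : ℕ
  col : ℕ
deriving DecidableEq

/-- An `ℓ`-multipartition, recorded by the row lengths of each component. -/
structure Multipartition (ℓ : ℕ) where
  part : Fin ℓ → ℕ → ℕ
  antitone : ∀ l, Antitone (part l)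
  finite : ∀ l, ∃ N, ∀ i, N ≤ i → part l i = 0

variable {ℓ : ℕ}

/-- The set of boxes (cells) of the Young diagram of a multipartition. -/
def cells (lam : Multipartition ℓ) : Set (Box ℓ) :=
  {b | b.col < lam.part b.comp b.row}

/-- The number of boxes of a multipartition. -/
noncomputable def size (lam : Multipartition ℓ) : ℕ := (cells lam).ncard

/-- The number of boxes of the `l`-th component. -/
noncomputable def csize (lam : Multipartition ℓ) (l : Fin ℓ) : ℕ := ∑ᶠ r, lam.part l r

/-- The residue `c - r + κ_l` of a box, for a multicharge `κ`. -/
def res (e : ℕ) (κ : Fin ℓ → ZMod e) (b : Box ℓ) : ZMod e :=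
  (b.col : ZMod e) - (b.row : ZMod e) + κ b.comp

/-- Lexicographic key realizing the total order `≺_θ` attached to the loading `θ`
(with an infinitesimally small `ε`): compare `θ_l + (r - c)·ℓ` first and then `r + c`. -/
def key (θ : Fin ℓ → ℤ) (b : Box ℓ) : ℤ × ℤ :=
  (θ b.comp + ((b.row : ℤ) - (b.col : ℤ)) * (ℓ : ℤ), (b.row : ℤ) + (b.col : ℤ))

/-- `a ≺_θ b` : the box `a` is strictly to the left of the box `b`. -/
def Bleft (θ : Fin ℓ → ℤ) (a b : Box ℓ) : Prop :=
  Prod.Lex (· < ·) (· < ·) (key θ a) (key θ b)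

/-- `b` is an addable box of the diagram `S`. -/
def AddableS (S : Set (Box ℓ)) (b : Box ℓ) : Prop :=
  b ∉ S ∧ (b.col = 0 ∨ (⟨b.comp, b.row, b.col - 1⟩ : Box ℓ) ∈ S) ∧
    (b.row = 0 ∨ (⟨b.comp, b.row - 1, b.col⟩ : Box ℓ) ∈ S)

/-- `b` is a removable box of the diagram `S`. -/
def RemovableS (S : Set (Box ℓ)) (b : Box ℓ) : Prop :=
  b ∈ S ∧ (⟨b.comp, b.row, b.col + 1⟩ : Box ℓ) ∉ S ∧ (⟨b.comp, b.row + 1, b.col⟩ : Box ℓ) ∉ S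

/-- `b` is an addable-or-removable box of `lam` of residue `i`. -/
def BTheta (e : ℕ) (κ : Fin ℓ → ZMod e) (lam : Multipartition ℓ) (i : ZMod e)
    (b : Box ℓ) : Prop :=
  (AddableS (cells lam) b ∨ RemovableS (cells lam) b) ∧ res e κ b = i

/-- `a` and `b` are adjacent among the addable-or-removable `i`-boxes of `lam`,
with `a` strictly to the left of `b`. -/
def AdjacentB (e : ℕ) (κ : Fin ℓ → ZMod e) (θ : Fin ℓ → ℤ) (lam : Multipartition ℓ)
    (i : ZMod e) (a b : Box ℓ) : Prop :=
  BTheta e κ lam i a ∧ BTheta e κ lam i b ∧ Bleft θ a b ∧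
    ∀ x, BTheta e κ lam i x → ¬ (Bleft θ a x ∧ Bleft θ x b)

/-- A `(θ, i)`-staggered sequence of `lam`. -/
structure Staggered (e : ℕ) (κ : Fin ℓ → ZMod e) (θ : Fin ℓ → ℤ)
    (lam : Multipartition ℓ) (i : ZMod e) (s : List (Box ℓ)) : Prop where
  ne : s ≠ []
  nodup : s.Nodup
  removable : ∀ b ∈ s, RemovableS (cells lam) b ∧ res e κ b = i
  chain : s.Chain' (AdjacentB e κ θ lam i)
  last_max : ∀ b, BTheta e κ lam i b → b = s.getLast ne ∨ Bleft θ b (s.getLast ne)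
  head_min : ∀ a, AdjacentB e κ θ lam i a (s.head ne) → AddableS (cells lam) a

/-- The set of Uglov (equivalently, staggered) multipartitions, defined recursively:
`lam` is Uglov iff it is empty or it has a staggered sequence whose removal yields an
Uglov multipartition. -/
inductive Uglov (e : ℕ) (κ : Fin ℓ → ZMod e) (θ : Fin ℓ → ℤ) : Multipartition ℓ → Prop
  | empty (lam : Multipartition ℓ) (h : cells lam = ∅) : Uglov e κ θ lam
  | step (lam mu : Multipartition ℓ) (i : ZMod e) (s : List (Box ℓ))
      (hs : Staggered e κ θ lam i s) (hmu : cells mu = cells lam \ {b | b ∈ s})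
      (h : Uglov e κ θ mu) : Uglov e κ θ lam

/-- `L` is a decomposition path for `lam`: a sequence of staggered sequences removing
`lam` down to the empty multipartition. -/
inductive IsDecompPath (e : ℕ) (κ : Fin ℓ → ZMod e) (θ : Fin ℓ → ℤ) :
    Multipartition ℓ → List (List (Box ℓ)) → Prop
  | nil (lam : Multipartition ℓ) (h : cells lam = ∅) : IsDecompPath e κ θ lam []
  | cons (lam mu : Multipartition ℓ) (i : ZMod e) (s : List (Box ℓ))
      (L : List (List (Box ℓ)))
      (hs : Staggered e κ θ lam i s) (hmu : cells mu = cells lam \ {b | b ∈ s})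
      (h : IsDecompPath e κ θ mu L) : IsDecompPath e κ θ lam (s :: L)

/-- A standard tableau with entries `1, ..., n` on the diagram `S`: a bijection onto
`{1, ..., n}` increasing along rows and columns. -/
def IsStd (S : Set (Box ℓ)) (n : ℕ) (f : Box ℓ → ℕ) : Prop :=
  (∀ b ∈ S, 1 ≤ f b ∧ f b ≤ n) ∧
  (∀ a ∈ S, ∀ b ∈ S, f a = f b → a = b) ∧
  (∀ m : ℕ, 1 ≤ m → m ≤ n → ∃ b ∈ S, f b = m) ∧
  (∀ b : Box ℓ, b ∈ S → (⟨b.comp, b.row + 1, b.col⟩ : Box ℓ) ∈ S →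
    f b < f ⟨b.comp, b.row + 1, b.col⟩) ∧
  (∀ b : Box ℓ, b ∈ S → (⟨b.comp, b.row, b.col + 1⟩ : Box ℓ) ∈ S →
    f b < f ⟨b.comp, b.row, b.col + 1⟩)

/-- `b` belongs to the `j`-th staggered sequence of the path `L`. -/
def InSeq (L : List (List (Box ℓ))) (j : ℕ) (b : Box ℓ) : Prop :=
  ∃ h : j < L.length, b ∈ L.get ⟨j, h⟩

/-- The positive decomposition tableau `t_d` of a decomposition path: entries increase
from left to right within each staggered sequence, and boxes of later staggered sequences
get smaller entries. -/
def IsPosTab (θ : Fin ℓ → ℤ) (S : Set (Box ℓ)) (n : ℕ) (L : List (List (Box ℓ)))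
    (f : Box ℓ → ℕ) : Prop :=
  IsStd S n f ∧
  (∀ j a b, InSeq L j a → InSeq L j b → Bleft θ a b → f a < f b) ∧
  (∀ j j' a b, j' < j → InSeq L j a → InSeq L j' b → f a < f b)

/-- The negative decomposition tableau `t_d^◇` of a decomposition path: entries decrease
from left to right within each staggered sequence, and boxes of later staggered sequences
get smaller entries. -/
def IsNegTab (θ : Fin ℓ → ℤ) (S : Set (Box ℓ)) (n : ℕ) (L : List (List (Box ℓ)))
    (f : Box ℓ → ℕ) : Prop :=
  IsStd S n f ∧
  (∀ j a b, InSeq L j a → InSeq L j b → Bleft θ a b → f b < f a) ∧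
  (∀ j j' a b, j' < j → InSeq L j a → InSeq L j' b → f a < f b)

/-- The tableaux `f` (on the diagram `S`) and `g` (on the diagram `S'`) have the same
residue sequence: boxes carrying equal entries have equal residues. -/
def SameResSeq (e : ℕ) (κ : Fin ℓ → ZMod e) (S S' : Set (Box ℓ))
    (f g : Box ℓ → ℕ) : Prop :=
  ∀ a ∈ S, ∀ b ∈ S', f a = g b → res e κ a = res e κ b

/-- The tableau `g` is obtained from `f` by permuting the entries within each staggered
sequence of `L` (the action of an element of the Young subgroup `S_d`). -/
def TwistOf (L : List (List (Box ℓ))) (f g : Box ℓ → ℕ) : Prop :=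
  (∀ j a, InSeq L j a → ∃ b, InSeq L j b ∧ g b = f a) ∧
  (∀ j b, InSeq L j b → ∃ a, InSeq L j a ∧ g b = f a)

/-- The contribution of the box `b` to the degree of the tableau `f` on `S`: the number of
addable minus the number of removable boxes of `shape(f↓(f b))` with the same residue as
`b`, strictly to the right of `b`. -/
noncomputable def degContrib (e : ℕ) (κ : Fin ℓ → ZMod e) (θ : Fin ℓ → ℤ)
    (S : Set (Box ℓ)) (f : Box ℓ → ℕ) (b : Box ℓ) : ℤ :=
  (({a | AddableS {x | x ∈ S ∧ f x ≤ f b} a ∧ res e κ a = res e κ b ∧ Bleft θ b a}.ncard : ℤ))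
    - (({a | RemovableS {x | x ∈ S ∧ f x ≤ f b} a ∧ res e κ a = res e κ b ∧
          Bleft θ b a}.ncard : ℤ))

/-- The degree `deg_θ` of a standard tableau `f` on the diagram `S`. -/
noncomputable def degTab (e : ℕ) (κ : Fin ℓ → ZMod e) (θ : Fin ℓ → ℤ)
    (S : Set (Box ℓ)) (f : Box ℓ → ℕ) : ℤ :=
  ∑ᶠ b ∈ S, degContrib e κ θ S f b

/-- The number of inversions within the staggered sequences of the tableau `f`: this is the
Coxeter length of the Young-subgroup element twisting the positive decomposition tableau
into `f`. -/
noncomputable def invCountTab (θ : Fin ℓ → ℤ) (L : List (List (Box ℓ)))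
    (f : Box ℓ → ℕ) : ℕ :=
  Set.ncard {p : Box ℓ × Box ℓ |
    (∃ j, InSeq L j p.1 ∧ InSeq L j p.2) ∧ Bleft θ p.1 p.2 ∧ f p.2 < f p.1}

/-- The number of pairs of boxes in a common staggered sequence of `L`: this is the Coxeter
length `ℓ(ω₀^d)` of the longest element of the Young subgroup `S_d`. -/
noncomputable def pairCount (θ : Fin ℓ → ℤ) (L : List (List (Box ℓ))) : ℕ :=
  Set.ncard {p : Box ℓ × Box ℓ | (∃ j, InSeq L j p.1 ∧ InSeq L j p.2) ∧ Bleft θ p.1 p.2}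

end CQHA


namespace MM
open CQHA

lemma comp_eq (b : Box 1) : b.comp = 0 := Subsingleton.elim _ _

lemma box_ext {a b : Box 1} (hr : a.row = b.row) (hc : a.col = b.col) : a = b := by
  obtain ⟨x, r, c⟩ := a; obtain ⟨y, r', c'⟩ := b
  simp only at hr hc
  subst hr; subst hc; rw [Subsingleton.elim x y]

/-- The content of a box. -/
def ct (b : Box 1) : ℤ := (b.col : ℤ) - b.row

lemma mem_cells {lam : Multipartition 1} {b : Box 1} :
    b ∈ cells lam ↔ b.col < lam.part 0 b.row := by
  rw [cells, Set.mem_setOf_eq, comp_eq b]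

lemma rem_iff {lam : Multipartition 1} {b : Box 1} :
    RemovableS (cells lam) b ↔
      b.col + 1 = lam.part 0 b.row ∧ lam.part 0 (b.row + 1) < lam.part 0 b.row := by
  constructor
  · rintro ⟨h1, h2, h3⟩
    rw [mem_cells] at h1 h2 h3
    simp only at h2 h3
    omega
  · rintro ⟨h1, h2⟩
    refine ⟨mem_cells.mpr (by omega), fun h => ?_, fun h => ?_⟩
    · rw [mem_cells] at h; simp only at h; omega
    · rw [mem_cells] at h; simp only at h; omega

lemma add_iff {lam : Multipartition 1} {b : Box 1} :
    AddableS (cells lam) b ↔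
      b.col = lam.part 0 b.row ∧ (b.row = 0 ∨ lam.part 0 b.row < lam.part 0 (b.row - 1)) := by
  constructor
  · rintro ⟨h1, h2, h3⟩
    rw [mem_cells] at h1
    constructor
    · rcases h2 with h2 | h2
      · omega
      · rw [mem_cells] at h2; simp only at h2; omega
    · rcases h3 with h3 | h3
      · exact Or.inl h3
      · rw [mem_cells] at h3; simp only at h3
        rcases h2 with h2 | h2
        · right; omega
        · rw [mem_cells] at h2; simp only at h2; right; omega
  · rintro ⟨h1, h2⟩
    refine ⟨mem_cells.not.mpr (by omega), ?_, ?_⟩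
    · rcases Nat.eq_zero_or_pos b.col with h | h
      · exact Or.inl h
      · right; rw [mem_cells]; simp only; omega
    · rcases h2 with h2 | h2
      · exact Or.inl h2
      · right; rw [mem_cells]; simp only; omega

lemma key_eq (θ : Fin 1 → ℤ) (b : Box 1) :
    key θ b = (θ 0 - ct b, (b.row : ℤ) + b.col) := by
  rw [key, comp_eq b, ct]
  norm_num
  ring

lemma bleft_of_ct_lt {θ : Fin 1 → ℤ} {a b : Box 1} (h : ct b < ct a) : Bleft θ a b := by
  rw [Bleft, key_eq, key_eq, Prod.lex_iff]
  left; simp only; omega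

lemma bleft_asymm {θ : Fin 1 → ℤ} {a b : Box 1} (h1 : Bleft θ a b) (h2 : Bleft θ b a) :
    False := by
  rw [Bleft, Prod.lex_iff] at h1 h2
  omega

lemma ct_injOn {lam : Multipartition 1} {a b : Box 1}
    (ha : AddableS (cells lam) a ∨ RemovableS (cells lam) a)
    (hb : AddableS (cells lam) b ∨ RemovableS (cells lam) b)
    (h : ct a = ct b) : a = b := by
  have hanti : ∀ {r r' : ℕ}, r ≤ r' → lam.part 0 r' ≤ lam.part 0 r :=
    fun h => lam.antitone 0 h
  rw [ct, ct] at h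
  rcases lt_trichotomy a.row b.row with hr | hr | hr
  · have k1 : lam.part 0 b.row ≤ lam.part 0 (a.row + 1) := hanti (by omega)
    have k2 : lam.part 0 (a.row + 1) ≤ lam.part 0 a.row := hanti (by omega)
    rcases ha with ha | ha <;> rcases hb with hb | hb
    · rw [add_iff] at ha hb; omega
    · rw [add_iff] at ha; rw [rem_iff] at hb; omega
    · rw [rem_iff] at ha; rw [add_iff] at hb; omega
    · rw [rem_iff] at ha hb; omega
  · refine box_ext hr ?_
    rcases ha with ha | ha <;> rcases hb with hb | hb <;>
      [rw [add_iff] at ha hb; (rw [add_iff] at ha; rw [rem_iff] at hb);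
       (rw [rem_iff] at ha; rw [add_iff] at hb); rw [rem_iff] at ha hb] <;> omega
  · have k1 : lam.part 0 a.row ≤ lam.part 0 (b.row + 1) := hanti (by omega)
    have k2 : lam.part 0 (b.row + 1) ≤ lam.part 0 b.row := hanti (by omega)
    rcases ha with ha | ha <;> rcases hb with hb | hb
    · rw [add_iff] at ha hb; omega
    · rw [add_iff] at ha; rw [rem_iff] at hb; omega
    · rw [rem_iff] at ha; rw [add_iff] at hb; omega
    · rw [rem_iff] at ha hb; omega

lemma ct_lt_of_bleft {lam : Multipartition 1} {θ : Fin 1 → ℤ} {a b : Box 1}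
    (ha : AddableS (cells lam) a ∨ RemovableS (cells lam) a)
    (hb : AddableS (cells lam) b ∨ RemovableS (cells lam) b)
    (h : Bleft θ a b) : ct b < ct a := by
  rcases lt_trichotomy (ct a) (ct b) with hc | hc | hc
  · exact (bleft_asymm h (bleft_of_ct_lt hc)).elim
  · cases ct_injOn ha hb hc; exact (bleft_asymm h h).elim
  · exact hc

lemma res_eq_ct (e : ℕ) (κ : Fin 1 → ZMod e) (b : Box 1) :
    res e κ b = ((ct b : ℤ) : ZMod e) + κ 0 := by
  rw [res, comp_eq b, ct]
  push_cast
  ring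

lemma res_eq_iff {e : ℕ} (κ : Fin 1 → ZMod e) {a b : Box 1} :
    res e κ a = res e κ b ↔ (e : ℤ) ∣ ct a - ct b := by
  rw [res_eq_ct, res_eq_ct, add_left_inj, ZMod.intCast_eq_intCast_iff,
    Int.modEq_iff_dvd, dvd_sub_comm]

end MM

namespace MM
open CQHA

lemma le_getLast_of_sorted : ∀ {l : List ℕ}, List.Pairwise (· < ·) l →
    ∀ (hne : l ≠ []), ∀ y ∈ l, y ≤ l.getLast hne := by
  intro l
  induction l with
  | nil => intro _ hne; exact absurd rfl hne
  | cons a t IH =>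
    intro hp hne y hy
    cases t with
    | nil => simp at hy; simp [hy, List.getLast]
    | cons b t' =>
      rw [List.getLast_cons (by simp)]
      rcases List.mem_cons.mp hy with rfl | hy'
      · have hlast : (b :: t').getLast (by simp) ∈ b :: t' := List.getLast_mem _
        have := (List.pairwise_cons.mp hp).1 _ hlast
        omega
      · exact IH (List.pairwise_cons.mp hp).2 (by simp) y hy'

lemma head_le_of_sorted {l : List ℕ} (hp : List.Pairwise (· < ·) l)
    (hne : l ≠ []) : ∀ y ∈ l, l.head hne ≤ y := by
  cases l with
  | nil => exact absurd rfl hne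
  | cons a t =>
    intro y hy
    rcases List.mem_cons.mp hy with rfl | hy'
    · simp
    · exact le_of_lt ((List.pairwise_cons.mp hp).1 y hy')

lemma between_not_mem {l : List ℕ} (hp : List.Pairwise (· < ·) l) {n : ℕ}
    (hn : n < l.length - 1) {x : ℕ} (hx : x ∈ l) :
    ¬ (l.get ⟨n, by omega⟩ < x ∧ x < l.get ⟨n + 1, by omega⟩) := by
  rintro ⟨h1, h2⟩
  obtain ⟨j, hj⟩ := List.mem_iff_get.mp hx
  have hmono := List.pairwise_iff_get.mp hp
  have hj1 : (⟨n, by omega⟩ : Fin l.length) < j := by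
    by_contra hle
    rcases Fin.lt_or_eq_of_le (not_lt.mp hle) with h | h
    · have := hmono _ _ h; omega
    · rw [h] at hj; omega
  have hj2 : j < (⟨n + 1, by omega⟩ : Fin l.length) := by
    by_contra hle
    rcases Fin.lt_or_eq_of_le (not_lt.mp hle) with h | h
    · have := hmono _ _ h; omega
    · rw [← h] at hj; omega
  have hj1' : n < j.1 := hj1
  have hj2' : j.1 < n + 1 := hj2
  omega

lemma walk {e : ℕ} {κ : Fin 1 → ZMod e} {θ : Fin 1 → ℤ} {lam : Multipartition 1}
    {i : ZMod e} {y : Box 1} (hy : BTheta e κ lam i y) :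
    ∀ (s : List (Box 1)), s.Chain' (AdjacentB e κ θ lam i) → y ∉ s →
      ∀ x ∈ s, Bleft θ x y → ∀ (hne : s ≠ []), Bleft θ (s.getLast hne) y := by
  intro s
  induction s with
  | nil => intro _ _ x hx; exact absurd hx (by simp)
  | cons a t IH =>
    intro hch hys x hx hxy hne
    cases t with
    | nil =>
      simp only [List.mem_singleton] at hx
      subst hx
      simpa [List.getLast] using hxy
    | cons b t' =>
      rw [List.getLast_cons (by simp)]
      have hch' := List.isChain_cons_cons.mp hch
      have hys' : y ∉ b :: t' := fun h => hys (List.mem_cons_of_mem _ h)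
      rcases List.mem_cons.mp hx with rfl | hx'
      · have hadj := hch'.1
        have hnb : ¬ Bleft θ y b := fun hyb => hadj.2.2.2 y hy ⟨hxy, hyb⟩
        have hby : Bleft θ b y := by
          rcases lt_trichotomy (ct y) (ct b) with hc | hc | hc
          · exact bleft_of_ct_lt hc
          · exact absurd (ct_injOn hy.1 hadj.2.1.1 hc)
              (fun h => hys (h ▸ List.mem_cons_of_mem _ List.mem_cons_self))
          · exact absurd (bleft_of_ct_lt hc) hnb
        exact IH hch'.2 hys' b List.mem_cons_self hby (by simp)
      · exact IH hch'.2 hys' x hx' hxy (by simp)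

lemma part_diff {lam mu : Multipartition 1} {s : List (Box 1)}
    (hmu : cells mu = cells lam \ {b | b ∈ s})
    (hrem : ∀ b ∈ s, RemovableS (cells lam) b) (r : ℕ) :
    (mu.part 0 r = lam.part 0 r ∧ (⟨0, r, lam.part 0 r - 1⟩ : Box 1) ∉ s) ∨
      (mu.part 0 r + 1 = lam.part 0 r ∧ (⟨0, r, lam.part 0 r - 1⟩ : Box 1) ∈ s) := by
  have hiff : ∀ c : ℕ, c < mu.part 0 r ↔
      (c < lam.part 0 r ∧ (⟨0, r, c⟩ : Box 1) ∉ s) := by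
    intro c
    have := Set.ext_iff.mp hmu (⟨0, r, c⟩ : Box 1)
    rw [Set.mem_diff, Set.mem_setOf_eq, mem_cells, mem_cells] at this
    exact this
  have hcol : ∀ c : ℕ, (⟨0, r, c⟩ : Box 1) ∈ s → c + 1 = lam.part 0 r := by
    intro c hc
    have := rem_iff.mp (hrem _ hc)
    simpa using this.1
  by_cases hin : (⟨0, r, lam.part 0 r - 1⟩ : Box 1) ∈ s
  · right
    refine ⟨?_, hin⟩
    have hpos : 0 < lam.part 0 r := by have := hcol _ hin; omega
    have h1 : ¬ (lam.part 0 r - 1 < mu.part 0 r) := fun h => ((hiff _).mp h).2 hin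
    have h2 : ∀ c, c < lam.part 0 r - 1 → c < mu.part 0 r := by
      intro c hc
      refine (hiff c).mpr ⟨by omega, fun hcs => ?_⟩
      have := hcol _ hcs; omega
    have h3 : mu.part 0 r ≤ lam.part 0 r - 1 := by omega
    have h4 : lam.part 0 r - 1 ≤ mu.part 0 r := by
      by_contra hlt
      exact absurd (h2 (mu.part 0 r) (by omega)) (by omega)
    omega
  · left
    refine ⟨?_, hin⟩
    have h1 : ∀ c, c < lam.part 0 r → c < mu.part 0 r := by
      intro c hc
      refine (hiff c).mpr ⟨hc, fun hcs => ?_⟩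
      have := hcol _ hcs
      have : c = lam.part 0 r - 1 := by omega
      subst this; exact hin hcs
    have h2 : mu.part 0 r ≤ lam.part 0 r := by
      by_contra hlt
      have := (hiff (lam.part 0 r)).mp (by omega)
      omega
    have h3 : lam.part 0 r ≤ mu.part 0 r := by
      by_contra hlt
      exact absurd (h1 (mu.part 0 r) (by omega)) (by omega)
    omega

lemma forward {e : ℕ} (he : 2 ≤ e) {κ : Fin 1 → ZMod e} {θ : Fin 1 → ℤ}
    {lam : Multipartition 1} (h : Uglov e κ θ lam) :
    ∀ r : ℕ, lam.part 0 r - lam.part 0 (r + 1) < e := by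
  induction h with
  | empty lam h =>
    intro r
    have h0 : ∀ r, lam.part 0 r = 0 := by
      intro r
      by_contra hne
      have hb : (⟨0, r, 0⟩ : Box 1) ∈ cells lam := mem_cells.mpr (by simpa using Nat.pos_of_ne_zero hne)
      rw [h] at hb
      exact hb
    rw [h0, h0]; omega
  | step lam mu i s hs hmu hu IH =>
    intro r
    by_contra hge
    have hge' : lam.part 0 (r+1) + e ≤ lam.part 0 r := by
      have := lam.antitone 0 (Nat.le_succ r)
      omega
    have hd1 := part_diff hmu (fun b hb => (hs.removable b hb).1) r
    have hd2 := part_diff hmu (fun b hb => (hs.removable b hb).1) (r+1)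
    have hIH := IH r
    have hin : (⟨0, r, lam.part 0 r - 1⟩ : Box 1) ∈ s ∧
        lam.part 0 r = lam.part 0 (r+1) + e := by
      rcases hd1 with ⟨h1, h2⟩ | ⟨h1, h2⟩ <;> rcases hd2 with ⟨h3, h4⟩ | ⟨h3, h4⟩ <;>
        first | (exact absurd hIH (by omega)) | exact ⟨h2, by omega⟩
    obtain ⟨hbin, heq⟩ := hin
    set b : Box 1 := ⟨0, r, lam.part 0 r - 1⟩ with hbdef
    set a : Box 1 := ⟨0, r + 1, lam.part 0 (r+1)⟩ with hadef
    have hpr : 0 < lam.part 0 r := by omega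
    have haadd : AddableS (cells lam) a := by
      rw [add_iff]
      refine ⟨rfl, Or.inr ?_⟩
      simp only [hadef, Nat.add_sub_cancel]
      omega
    have hresab : res e κ a = res e κ b := by
      rw [res_eq_iff]
      have hct : ct a - ct b = -(e : ℤ) := by
        rw [ct, ct, hadef, hbdef]
        simp only
        omega
      rw [hct]
      exact Dvd.dvd.neg_right ⟨1, by ring⟩
    have hresb : res e κ b = i := (hs.removable b hbin).2
    have hath : BTheta e κ lam i a := ⟨Or.inl haadd, hresab.trans hresb⟩
    have hanotin : a ∉ s := by
      intro hasin
      have := mem_cells.mp ((hs.removable a hasin).1).1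
      simp only [hadef] at this
      omega
    have hba : Bleft θ b a := by
      apply bleft_of_ct_lt
      rw [ct, ct, hbdef, hadef]
      simp only
      omega
    have hlast := walk hath s hs.chain hanotin b hbin hba hs.ne
    rcases hs.last_max a hath with heq2 | hlt
    · exact hanotin (heq2 ▸ List.getLast_mem hs.ne)
    · exact bleft_asymm hlt hlast

end MM

namespace MM
open CQHA

/-- Row `r` carries a removable box of residue `i`. -/
def RemI (e : ℕ) (κ : Fin 1 → ZMod e) (lam : Multipartition 1) (i : ZMod e) (r : ℕ) : Prop :=
  RemovableS (cells lam) ⟨0, r, lam.part 0 r - 1⟩ ∧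
    res e κ (⟨0, r, lam.part 0 r - 1⟩ : Box 1) = i

/-- Row `r` carries a removable `i`-box such that every `i`-box weakly to its right
is removable. -/
def Qual (e : ℕ) (κ : Fin 1 → ZMod e) (lam : Multipartition 1) (i : ZMod e) (r : ℕ) : Prop :=
  RemI e κ lam i r ∧ ∀ b, BTheta e κ lam i b →
    ct b ≤ ct (⟨0, r, lam.part 0 r - 1⟩ : Box 1) → RemovableS (cells lam) b

open Classical in
noncomputable def rowList (e : ℕ) (κ : Fin 1 → ZMod e) (lam : Multipartition 1)
    (i : ZMod e) (r0 : ℕ) : List ℕ :=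
  (List.range (r0 + 1)).filter fun r => decide (Qual e κ lam i r)

lemma mem_rowList {e : ℕ} {κ : Fin 1 → ZMod e} {lam : Multipartition 1}
    {i : ZMod e} {r0 r : ℕ} :
    r ∈ rowList e κ lam i r0 ↔ r < r0 + 1 ∧ Qual e κ lam i r := by
  rw [rowList, List.mem_filter, List.mem_range]
  classical
  simp

lemma sorted_rowList {e : ℕ} {κ : Fin 1 → ZMod e} {lam : Multipartition 1}
    {i : ZMod e} {r0 : ℕ} : List.Pairwise (· < ·) (rowList e κ lam i r0) :=
  List.Pairwise.sublist List.filter_sublist List.pairwise_lt_range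

lemma cells_finite (lam : Multipartition 1) : (cells lam).Finite := by
  obtain ⟨N, hN⟩ := lam.finite 0
  have hsub : cells lam ⊆ (fun rc : ℕ × ℕ => (⟨0, rc.1, rc.2⟩ : Box 1)) ''
      (Set.Iio N ×ˢ Set.Iio (lam.part 0 0)) := by
    intro b hb
    have hb' := mem_cells.mp hb
    have h1 : b.row < N := by
      by_contra hge
      rw [hN b.row (by omega)] at hb'
      omega
    have h2 : b.col < lam.part 0 0 := lt_of_lt_of_le hb' (lam.antitone 0 (Nat.zero_le _))
    exact ⟨(b.row, b.col), ⟨h1, h2⟩, box_ext rfl rfl⟩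
  exact Set.Finite.subset (Set.Finite.image _ (Set.Finite.prod (Set.finite_Iio _)
    (Set.finite_Iio _))) hsub

lemma backward {e : ℕ} (he : 2 ≤ e) (κ : Fin 1 → ZMod e) (θ : Fin 1 → ℤ)
    (lam : Multipartition 1)
    (hres : ∀ r, lam.part 0 r - lam.part 0 (r + 1) < e) : Uglov e κ θ lam := by
  suffices H : ∀ n (lam : Multipartition 1), (cells lam).ncard = n →
      (∀ r, lam.part 0 r - lam.part 0 (r + 1) < e) → Uglov e κ θ lam from
    H _ lam rfl hres
  intro n
  induction n using Nat.strong_induction_on with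
  | _ n IH =>
  intro lam hn hres
  by_cases hemp : cells lam = ∅
  · exact Uglov.empty lam hemp
  classical
  have hanti : ∀ {r r' : ℕ}, r ≤ r' → lam.part 0 r' ≤ lam.part 0 r :=
    fun h => lam.antitone 0 h
  obtain ⟨N, hN⟩ := lam.finite 0
  have hp0 : 0 < lam.part 0 0 := by
    obtain ⟨b, hb⟩ := Set.nonempty_iff_ne_empty.mpr hemp
    have h1 := mem_cells.mp hb
    have h2 := hanti (Nat.zero_le b.row)
    omega
  set r0 := Nat.findGreatest (fun r => 0 < lam.part 0 r) N with hr0def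
  have hr0pos : 0 < lam.part 0 r0 := by
    rw [hr0def]
    exact Nat.findGreatest_spec (P := fun r => 0 < lam.part 0 r) (Nat.zero_le N) hp0
  have hr0succ : lam.part 0 (r0 + 1) = 0 := by
    by_cases hle : r0 + 1 ≤ N
    · have := Nat.findGreatest_is_greatest (P := fun r => 0 < lam.part 0 r)
        (lt_add_one r0) hle
      omega
    · exact hN _ (by omega)
  have hrle : ∀ {r : ℕ}, 0 < lam.part 0 r → r ≤ r0 := by
    intro r hr
    by_contra hgt
    have := hanti (show r0 + 1 ≤ r by omega)
    omega
  set i := res e κ (⟨0, r0, lam.part 0 r0 - 1⟩ : Box 1) with hidef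
  have hb0rem : RemovableS (cells lam) (⟨0, r0, lam.part 0 r0 - 1⟩ : Box 1) := by
    rw [rem_iff]; exact ⟨by simp; omega, by simp; omega⟩
  -- every addable-or-removable i-box lies weakly left of the box in row r0
  have hmin : ∀ b, BTheta e κ lam i b →
      ct (⟨0, r0, lam.part 0 r0 - 1⟩ : Box 1) ≤ ct b := by
    rintro b ⟨hbord, hresb⟩
    rcases hbord with hadd | hrem
    · rw [add_iff] at hadd
      obtain ⟨hc, hr⟩ := hadd
      by_cases hble : b.row ≤ r0
      · have := hanti hble
        rw [ct, ct]; simp only; omega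
      · have hbge : r0 + 1 ≤ b.row := by omega
        rcases Nat.eq_or_lt_of_le hbge with hbeq | hblt
        · -- row r0+1 : residue contradiction
          exfalso
          have hcol : b.col = 0 := by
            have := hanti (le_of_eq hbeq)
            omega
          have hdvd : (e : ℤ) ∣ ct b - ct (⟨0, r0, lam.part 0 r0 - 1⟩ : Box 1) := by
            rw [← res_eq_iff κ, hresb, hidef]
          have hctval : ct b - ct (⟨0, r0, lam.part 0 r0 - 1⟩ : Box 1) =
              -(lam.part 0 r0 : ℤ) := by
            rw [ct, ct]; simp only [hcol, ← hbeq]; push_cast; omega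
          have hdvd' : (e : ℤ) ∣ (lam.part 0 r0 : ℤ) := by
            rw [hctval] at hdvd; exact (dvd_neg.mp hdvd)
          have hle2 : (e : ℤ) ≤ (lam.part 0 r0 : ℤ) :=
            Int.le_of_dvd (by exact_mod_cast hr0pos) hdvd'
          have := hres r0
          omega
        · exfalso
          rcases hr with hr | hr
          · omega
          · have : lam.part 0 (b.row - 1) ≤ lam.part 0 (r0 + 1) :=
              hanti (by omega)
            omega
    · rw [rem_iff] at hrem
      obtain ⟨hc, hr⟩ := hrem
      have hbpos : 0 < lam.part 0 b.row := by omega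
      have hble : b.row ≤ r0 := hrle hbpos
      have := hanti hble
      rw [ct, ct]; simp only; omega
  have hqr0 : Qual e κ lam i r0 := by
    refine ⟨⟨hb0rem, rfl⟩, ?_⟩
    intro b hb hble
    have hgeq : ct b = ct (⟨0, r0, lam.part 0 r0 - 1⟩ : Box 1) :=
      le_antisymm hble (hmin b hb)
    have := ct_injOn hb.1 (Or.inr hb0rem) hgeq
    rw [this]; exact hb0rem
  set l := rowList e κ lam i r0 with hldef
  have hr0l : r0 ∈ l := mem_rowList.mpr ⟨by omega, hqr0⟩
  have hlne : l ≠ [] := List.ne_nil_of_mem hr0l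
  have hlsort : List.Pairwise (· < ·) l := sorted_rowList
  -- facts about qualifying rows
  have hremI : ∀ {r : ℕ}, r ∈ l → RemI e κ lam i r := fun h => (mem_rowList.mp h).2.1
  have hqual : ∀ {r : ℕ}, r ∈ l → Qual e κ lam i r := fun h => (mem_rowList.mp h).2
  have hstep : ∀ {r : ℕ}, RemI e κ lam i r → lam.part 0 (r + 1) < lam.part 0 r := by
    intro r hr
    have := rem_iff.mp hr.1
    simpa using this.2
  have hctlt : ∀ {r r' : ℕ}, RemI e κ lam i r → RemI e κ lam i r' → r < r' →
      ct (⟨0, r', lam.part 0 r' - 1⟩ : Box 1) < ct (⟨0, r, lam.part 0 r - 1⟩ : Box 1) := by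
    intro r r' h h' hlt
    have h1 : lam.part 0 r' ≤ lam.part 0 r := hanti (by omega)
    have h2 := hstep h
    have h3 := hstep h'
    rw [ct, ct]; simp only; omega
  have hrowlt : ∀ {r r' : ℕ}, RemI e κ lam i r → RemI e κ lam i r' →
      ct (⟨0, r', lam.part 0 r' - 1⟩ : Box 1) < ct (⟨0, r, lam.part 0 r - 1⟩ : Box 1) →
      r < r' := by
    intro r r' h h' hc
    by_contra hge
    rcases Nat.eq_or_lt_of_le (not_lt.mp hge) with heq | hlt
    · rw [heq] at hc; omega
    · have := hctlt h' h hlt; omega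
  -- removable i-boxes are the boxes of their rows
  have hrembox : ∀ b, RemovableS (cells lam) b → res e κ b = i →
      b = (⟨0, b.row, lam.part 0 b.row - 1⟩ : Box 1) ∧ RemI e κ lam i b.row ∧ b.row ≤ r0 := by
    intro b hbrem hbres
    have hc := rem_iff.mp hbrem
    have hcol2 : b.col = lam.part 0 b.row - 1 := by omega
    have hbeq : b = (⟨0, b.row, lam.part 0 b.row - 1⟩ : Box 1) :=
      box_ext (a := b) (b := (⟨0, b.row, lam.part 0 b.row - 1⟩ : Box 1)) rfl hcol2
    refine ⟨hbeq, ⟨hbeq ▸ hbrem, hbeq ▸ hbres⟩, hrle (by omega)⟩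
  set f : ℕ → Box 1 := fun r => (⟨0, r, lam.part 0 r - 1⟩ : Box 1) with hfdef
  set s : List (Box 1) := l.map f with hsdef
  have hsne : s ≠ [] := by
    simp only [hsdef, ne_eq, List.map_eq_nil_iff]; exact hlne
  have hbth : ∀ {r : ℕ}, r ∈ l → BTheta e κ lam i (f r) :=
    fun h => ⟨Or.inr (hremI h).1, (hremI h).2⟩
  -- the chain condition
  have hchain : s.Chain' (AdjacentB e κ θ lam i) := by
    rw [hsdef]; unfold List.Chain'; rw [List.isChain_map, List.isChain_iff_getElem]
    intro m hm
    set r := l.get ⟨m, by omega⟩ with hrdef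
    set r' := l.get ⟨m + 1, by omega⟩ with hr'def
    have hrl : r ∈ l := List.get_mem _ _
    have hr'l : r' ∈ l := List.get_mem _ _
    have hrr' : r < r' := List.pairwise_iff_get.mp hlsort _ _ (Fin.mk_lt_mk.mpr (by omega))
    refine ⟨hbth hrl, hbth hr'l, bleft_of_ct_lt (hctlt (hremI hrl) (hremI hr'l) hrr'), ?_⟩
    rintro x hx ⟨h1, h2⟩
    have hx1 : ct x < ct (f r) := ct_lt_of_bleft (hbth hrl).1 hx.1 h1
    have hx2 : ct (f r') < ct x := ct_lt_of_bleft hx.1 (hbth hr'l).1 h2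
    have hxrem : RemovableS (cells lam) x := (hqual hrl).2 x hx (le_of_lt hx1)
    obtain ⟨hxeq, hxremI, hxle⟩ := hrembox x hxrem hx.2
    have hxlt1 : r < x.row := hrowlt (hremI hrl) hxremI (by rw [← hxeq]; exact hx1)
    have hxlt2 : x.row < r' := hrowlt hxremI (hremI hr'l) (by rw [← hxeq]; exact hx2)
    have hxqual : Qual e κ lam i x.row := by
      refine ⟨hxremI, fun w hw hwle => (hqual hrl).2 w hw ?_⟩
      calc ct w ≤ ct x := by rw [hxeq]; exact hwle
      _ ≤ ct (f r) := le_of_lt hx1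
    have hxmem : x.row ∈ l := mem_rowList.mpr ⟨by omega, hxqual⟩
    exact between_not_mem hlsort (by omega) hxmem ⟨hxlt1, hxlt2⟩
  -- the last element is the box in row r0
  have hlastrow : l.getLast hlne = r0 := by
    have h1 : l.getLast hlne ≤ r0 := by
      have := mem_rowList.mp (List.getLast_mem hlne)
      omega
    have h2 : r0 ≤ l.getLast hlne := le_getLast_of_sorted hlsort hlne r0 hr0l
    omega
  have hslast : s.getLast hsne = f r0 := by
    refine (List.getLast_map (f := f) (l := l) hsne).trans ?_
    exact congrArg f hlastrow
  have hlastmax : ∀ b, BTheta e κ lam i b →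
      b = s.getLast hsne ∨ Bleft θ b (s.getLast hsne) := by
    intro b hb
    rw [hslast]
    rcases eq_or_lt_of_le (hmin b hb) with heq | hlt
    · exact Or.inl (ct_injOn hb.1 (Or.inr hb0rem) heq.symm)
    · exact Or.inr (bleft_of_ct_lt hlt)
  -- head is minimal
  have hshead : s.head hsne = f (l.head hlne) := List.head_map (f := f) (l := l) hsne
  have hheadmin : ∀ a, AdjacentB e κ θ lam i a (s.head hsne) →
      AddableS (cells lam) a := by
    rintro a ⟨ha, hh, hlt, hnb⟩
    rcases ha.1 with hadd | hrem
    · exact hadd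
    exfalso
    set r1 := l.head hlne with hr1def
    have hr1l : r1 ∈ l := List.head_mem hlne
    have hctlt1 : ct (f r1) < ct a := by
      have := ct_lt_of_bleft ha.1 hh.1 hlt
      rwa [hshead] at this
    have hPa : ∀ w, BTheta e κ lam i w → ct w ≤ ct a → RemovableS (cells lam) w := by
      intro w hw hwle
      rcases le_or_gt (ct w) (ct (f r1)) with hcase | hcase
      · exact (hqual hr1l).2 w hw hcase
      · rcases eq_or_lt_of_le hwle with heq | hlt2
        · rw [ct_injOn hw.1 ha.1 heq]; exact hrem
        · refine absurd ⟨bleft_of_ct_lt hlt2, ?_⟩ (hnb w hw)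
          rw [hshead]
          exact bleft_of_ct_lt hcase
    obtain ⟨haeq, haremI, hale⟩ := hrembox a hrem ha.2
    have har1 : a.row < r1 := hrowlt haremI (hremI hr1l) (by rw [← haeq]; exact hctlt1)
    have haqual : Qual e κ lam i a.row := ⟨haremI, fun w hw hwle => hPa w hw (haeq ▸ hwle)⟩
    have hamem : a.row ∈ l := mem_rowList.mpr ⟨by omega, haqual⟩
    have := head_le_of_sorted hlsort hlne a.row hamem
    omega
  have hstagg : Staggered e κ θ lam i s := by
    refine ⟨hsne, ?_, ?_, hchain, hlastmax, hheadmin⟩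
    · refine List.Nodup.map_on ?_ (List.Pairwise.imp (fun h => Nat.ne_of_lt h) hlsort)
      intro x _ y _ hxy
      exact congrArg Box.row hxy
    · intro b hb
      obtain ⟨r, hrl, hrb⟩ := List.mem_map.mp hb
      exact hrb ▸ ⟨(hremI hrl).1, (hremI hrl).2⟩
  -- construct mu
  set q : ℕ → ℕ := fun r => if r ∈ l then lam.part 0 r - 1 else lam.part 0 r with hqdef
  have hqle : ∀ r, q r ≤ lam.part 0 r := by
    intro r
    by_cases h : r ∈ l
    · simp only [hqdef, if_pos h]; omega
    · simp only [hqdef, if_neg h]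
      exact le_rfl
  have hqanti : Antitone q := by
    apply antitone_nat_of_succ_le
    intro r
    have h3 : lam.part 0 (r + 1) ≤ lam.part 0 r := hanti (by omega)
    by_cases h : r ∈ l <;> by_cases hh : r + 1 ∈ l
    · simp only [hqdef, if_pos h, if_pos hh]; have := hstep (hremI h); omega
    · simp only [hqdef, if_pos h, if_neg hh]; have := hstep (hremI h); omega
    · simp only [hqdef, if_neg h, if_pos hh]; omega
    · simp only [hqdef, if_neg h, if_neg hh]; omega
  set mu : Multipartition 1 := ⟨fun _ => q, fun _ => hqanti,
    fun _ => ⟨N, fun r hr => by have h1 := hqle r; have h2 := hN r hr; show q r = 0; omega⟩⟩ with hmudef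
  have hmems : ∀ b : Box 1, b ∈ s ↔ b.row ∈ l ∧ b.col + 1 = lam.part 0 b.row := by
    intro b
    rw [hsdef, List.mem_map]
    constructor
    · rintro ⟨r, hrl, rfl⟩
      have := hstep (hremI hrl)
      exact ⟨hrl, by simp only [hfdef]; omega⟩
    · rintro ⟨h1, h2⟩
      exact ⟨b.row, h1, box_ext rfl (by simp only [hfdef]; omega)⟩
  have hmu : cells mu = cells lam \ {b | b ∈ s} := by
    ext b
    rw [Set.mem_diff, Set.mem_setOf_eq, mem_cells, mem_cells, hmems]
    show b.col < q b.row ↔ _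
    by_cases h : b.row ∈ l
    · have := hstep (hremI h)
      simp only [hqdef, if_pos h, h, true_and]
      constructor
      · intro hlt; exact ⟨by omega, fun hh => by omega⟩
      · rintro ⟨h1, h2⟩; omega
    · simp only [hqdef, if_neg h, h, false_and, not_false_iff, and_true]
  have hmures : ∀ r, mu.part 0 r - mu.part 0 (r + 1) < e := by
    intro r
    show q r - q (r + 1) < e
    have hr := hres r
    have h3 : lam.part 0 (r + 1) ≤ lam.part 0 r := hanti (by omega)
    by_cases h1 : r ∈ l <;> by_cases h2 : r + 1 ∈ l
    · have := hstep (hremI h1); simp only [hqdef, if_pos h1, if_pos h2]; omega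
    · have := hstep (hremI h1); simp only [hqdef, if_pos h1, if_neg h2]; omega
    · -- the dangerous case
      simp only [hqdef, if_neg h1, if_pos h2]
      have hs2 := hstep (hremI h2)
      by_contra hbad
      -- then lam.part 0 r = lam.part 0 (r+1) + e - 1, and row r qualifies
      have heq : lam.part 0 r + 1 = lam.part 0 (r + 1) + e := by omega
      have hp1 : 0 < lam.part 0 (r + 1) := by omega
      have hprpos : 0 < lam.part 0 r := by omega
      have hrrem : RemovableS (cells lam) (⟨0, r, lam.part 0 r - 1⟩ : Box 1) := by
        rw [rem_iff]
        exact ⟨by simp; omega, by simp; omega⟩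
      have hctdiff : ct (⟨0, r, lam.part 0 r - 1⟩ : Box 1) -
          ct (⟨0, r + 1, lam.part 0 (r + 1) - 1⟩ : Box 1) = (e : ℤ) := by
        rw [ct, ct]; push_cast; omega
      have hrres : res e κ (⟨0, r, lam.part 0 r - 1⟩ : Box 1) = i := by
        have h5 : res e κ (⟨0, r, lam.part 0 r - 1⟩ : Box 1) =
            res e κ (⟨0, r + 1, lam.part 0 (r + 1) - 1⟩ : Box 1) := by
          rw [res_eq_iff κ, hctdiff]
        rw [h5]; exact (hremI h2).2
      have hrremI : RemI e κ lam i r := ⟨hrrem, hrres⟩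
      have hrqual : Qual e κ lam i r := by
        refine ⟨hrremI, ?_⟩
        intro w hw hwle
        rcases le_or_gt (ct w) (ct (⟨0, r + 1, lam.part 0 (r + 1) - 1⟩ : Box 1))
          with hcase | hcase
        · exact (hqual h2).2 w hw hcase
        · have hdvd : (e : ℤ) ∣
              ct w - ct (⟨0, r + 1, lam.part 0 (r + 1) - 1⟩ : Box 1) := by
            rw [← res_eq_iff κ, hw.2]; exact ((hremI h2).2).symm
          have hle2 : (e : ℤ) ≤ ct w - ct (⟨0, r + 1, lam.part 0 (r + 1) - 1⟩ : Box 1) :=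
            Int.le_of_dvd (by omega) hdvd
          have hweq : ct w = ct (⟨0, r, lam.part 0 r - 1⟩ : Box 1) := by omega
          rw [ct_injOn hw.1 (Or.inr hrrem) hweq]
          exact hrrem
      exact h1 (mem_rowList.mpr ⟨by have := hrle hprpos; omega, hrqual⟩)
    · simp only [hqdef, if_neg h1, if_neg h2]; omega
  have hssub : cells mu ⊂ cells lam := by
    rw [hmu]
    refine ⟨Set.diff_subset, fun hsub => ?_⟩
    have hb0cell : (⟨0, r0, lam.part 0 r0 - 1⟩ : Box 1) ∈ cells lam := hb0rem.1
    have hb0s : (⟨0, r0, lam.part 0 r0 - 1⟩ : Box 1) ∈ s := by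
      rw [hmems]; exact ⟨hr0l, by simp; omega⟩
    have := hsub hb0cell
    rw [Set.mem_diff] at this
    exact this.2 hb0s
  have hcard : (cells mu).ncard < n :=
    hn ▸ Set.ncard_lt_ncard hssub (cells_finite lam)
  exact Uglov.step lam mu i s hstagg hmu (IH _ hcard mu rfl hmures)

end MM

open CQHA

/-- (Misra–Miwa, level `ℓ = 1`.) A partition is an Uglov (equivalently,
staggered) partition for the parameter `e` if and only if it is `e`-restricted, i.e.
`λ_i − λ_{i+1} < e` for all `i`. -/
theorem uglov_iff_e_restricted_level_one (e : ℕ) (he : 2 ≤ e)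
    (κ : Fin 1 → ZMod e) (θ : Fin 1 → ℤ) (lam : Multipartition 1) :
    Uglov e κ θ lam ↔ ∀ i : ℕ, lam.part 0 i - lam.part 0 (i + 1) < e := by
  exact ⟨fun h => MM.forward he h, fun h => MM.backward he κ θ lam h⟩
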